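/- A permutation π of {1,...,n} (n ≥ 3) has its lexicographically first increasing triple at {1,2,r} if and only if π(2) is the second largest value among π(1),...,π(r) and π(r) is the largest value among π(1),...,π(r). -/

import Mathlib

/-- The lexicographically first increasing (I-II-III) pattern of `π` occurs at
positions `a < b < c` (0-indexed elements of `Fin n`). -/
def FirstIncTripleAt (n : ℕ) (π : Equiv.Perm (Fin n)) (a b c : Fin n) : Prop :=
  a < b ∧ b < c ∧ π a < π b ∧ π b < π c ∧
  ∀ d e f : Fin n, d < e → e < f →
    (d < a ∨ (d = a ∧ (e < b ∨ (e = b ∧ f < c)))) →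
    ¬ (π d < π e ∧ π e < π f)

/-- The first increasing triple of `π` is at `{1,2,r}` (positions `0,1,r-1` in `Fin n`)
iff `π(2)` is the second largest and `π(r)` the largest among `π(1),…,π(r)`. -/
theorem stmt_1 (n r : ℕ) (hn : 3 ≤ n) (hr3 : 3 ≤ r) (hrn : r ≤ n)
    (π : Equiv.Perm (Fin n)) :
    FirstIncTripleAt n π ⟨0, by omega⟩ ⟨1, by omega⟩ ⟨r - 1, by omega⟩ ↔
      ((∀ i : Fin n, i < ⟨r - 1, by omega⟩ → i ≠ ⟨1, by omega⟩ → π i < π ⟨1, by omega⟩) ∧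
       (∀ i : Fin n, i < ⟨r - 1, by omega⟩ → π i < π ⟨r - 1, by omega⟩)) := by
  constructor
  · rintro ⟨hab, hbc, h01, h1r, hmin⟩
    have hA : ∀ i : Fin n, i < ⟨r - 1, by omega⟩ → i ≠ ⟨1, by omega⟩ →
        π i < π ⟨1, by omega⟩ := by
      intro i hi hne
      have hiv : i.val < r - 1 := hi
      have hnev : i.val ≠ 1 := fun h => hne (Fin.ext h)
      rcases Nat.lt_or_ge i.val 1 with h | h
      · have hi0 : i = (⟨0, by omega⟩ : Fin n) := by
          rw [Fin.ext_iff]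
          show i.val = 0
          omega
        rw [hi0]; exact h01
      · have hlt1 : (⟨1, by omega⟩ : Fin n) < i := by
          rw [Fin.lt_def]
          show 1 < i.val
          omega
        by_contra hle
        push_neg at hle
        have hne' : π (⟨1, by omega⟩ : Fin n) ≠ π i := fun heq =>
          hne (π.injective heq.symm)
        have hlt : π (⟨1, by omega⟩ : Fin n) < π i := lt_of_le_of_ne hle hne'
        exact hmin ⟨0, by omega⟩ ⟨1, by omega⟩ i (Fin.mk_lt_mk.mpr (by omega)) hlt1
          (Or.inr ⟨rfl, Or.inr ⟨rfl, hi⟩⟩) ⟨h01, hlt⟩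
    refine ⟨hA, ?_⟩
    intro i hi
    by_cases h1 : i = (⟨1, by omega⟩ : Fin n)
    · rw [h1]; exact h1r
    · exact lt_trans (hA i hi h1) h1r
  · rintro ⟨hA, hB⟩
    have h01 : π (⟨0, by omega⟩ : Fin n) < π ⟨1, by omega⟩ := by
      apply hA
      · exact Fin.mk_lt_mk.mpr (by omega)
      · intro h
        have : (0 : ℕ) = 1 := congrArg Fin.val h
        omega
    have h1r : π (⟨1, by omega⟩ : Fin n) < π ⟨r - 1, by omega⟩ :=
      hB _ (Fin.mk_lt_mk.mpr (by omega))
    refine ⟨Fin.mk_lt_mk.mpr (by omega), Fin.mk_lt_mk.mpr (by omega), h01, h1r, ?_⟩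
    rintro d e f hde hef hlex ⟨hpd, hpe⟩
    have hdev : d.val < e.val := hde
    have hefv : e.val < f.val := hef
    rcases hlex with h | ⟨hd0, h⟩
    · have : d.val < 0 := h
      omega
    · rcases h with h | ⟨he1, hf⟩
      · have : e.val < 1 := h
        have : d.val = 0 := congrArg Fin.val hd0
        omega
      · have he1v : e.val = 1 := congrArg Fin.val he1
        have hf1 : f ≠ (⟨1, by omega⟩ : Fin n) := by
          intro h
          have : f.val = 1 := congrArg Fin.val h
          omega
        have hlt := hA f hf hf1
        rw [← he1] at hlt
        exact absurd hpe (lt_asymm hlt)
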